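/- Let X be a finite-dimensional real vector space and K ⊂ X an ellipsoid centered at 0, i.e. the unit ball of an inner product ⟨·,·⟩ on X. Let R : X* → Hom(X,X) be a linear map such that for every λ ∈ X* the operator R_λ = R(λ) satisfies tr R_λ = 0, and such that for every λ ∈ X* and every x ∈ ∂K with λ(x) = 0, the vector R_λ(x) is tangent to ∂K at x. Then ⟨R_λ(v), v⟩ = 0 for every λ ∈ X* and every v ∈ X; in particular R_λ(x) is tangent to ∂K at every x ∈ ∂K. -/

import Mathlib

open Filter Topology

/-- `v` is *forward tangent* to `∂B` at `x` if there are a sequence `p i ∈ ∂B` with `p i → x`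
and positive reals `c i` with `c i • (p i - x) → v`. -/
def IsForwardTangent {X : Type*} [NormedAddCommGroup X] [NormedSpace ℝ X]
    (B : Set X) (x v : X) : Prop :=
  ∃ (p : ℕ → X) (c : ℕ → ℝ), (∀ i, p i ∈ frontier B) ∧ (∀ i, 0 < c i) ∧
    Tendsto p atTop (𝓝 x) ∧ Tendsto (fun i => c i • (p i - x)) atTop (𝓝 v)

/-- `v` is *tangent* to `∂B` at `x` if both `v` and `-v` are forward tangent to `∂B` at `x`. -/
def IsTangentVec {X : Type*} [NormedAddCommGroup X] [NormedSpace ℝ X]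
    (B : Set X) (x v : X) : Prop :=
  IsForwardTangent B x v ∧ IsForwardTangent B x (-v)

section RTE_aux
set_option maxHeartbeats 1000000
set_option linter.unusedSectionVars false

variable {X : Type*} [NormedAddCommGroup X] [NormedSpace ℝ X] [FiniteDimensional ℝ X]
  (f : X →ₗ[ℝ] X →ₗ[ℝ] ℝ)

lemma fcont : Continuous (fun p : X × X => f p.1 p.2) := by
  have hfc : Continuous fun x : X => LinearMap.toContinuousLinearMap (f x) :=
    (LinearMap.toContinuousLinearMap.toLinearMap.comp f).continuous_of_finiteDimensional
  have := isBoundedBilinearMap_apply (𝕜 := ℝ) (E := X) (F := ℝ) |>.continuous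
  exact this.comp ((hfc.comp continuous_fst).prodMk continuous_snd)

variable (hsymm : ∀ x y, f x y = f y x) (hpos : ∀ x, x ≠ 0 → 0 < f x x)
  (K : Set X) (hK : K = {x | f x x ≤ 1}) (hfr : ∀ x, x ∈ frontier K ↔ f x x = 1)

include hK in
lemma frontier_char : ∀ x, x ∈ frontier K ↔ f x x = 1 := by
  intro x
  have hg : Continuous fun x : X => f x x :=
    (fcont f).comp (continuous_id.prodMk continuous_id)
  have hKp : K = (fun x : X => f x x) ⁻¹' (Set.Iic 1) := hK
  constructor
  · intro hx
    have h1 : frontier K ⊆ (fun x : X => f x x) ⁻¹' (frontier (Set.Iic 1)) := by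
      rw [hKp]; exact hg.frontier_preimage_subset _
    have := h1 hx
    rwa [frontier_Iic, Set.mem_preimage, Set.mem_singleton_iff] at this
  · intro hx
    constructor
    · exact subset_closure (by rw [hK]; exact le_of_eq hx)
    · intro hmem
      have hc : ContinuousAt (fun t : ℝ => t • x) 1 :=
        (continuous_id.smul continuous_const).continuousAt
      have h1 : ∀ᶠ t : ℝ in 𝓝 1, t • x ∈ K := by
        have h2 : ∀ᶠ t : ℝ in 𝓝 1, t • x ∈ interior K := by
          apply hc.eventually_mem
          rw [one_smul]
          exact isOpen_interior.mem_nhds hmem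
        exact h2.mono fun t ht => interior_subset ht
      have h1' : ∀ᶠ t : ℝ in 𝓝[>] (1:ℝ), t • x ∈ K := h1.filter_mono nhdsWithin_le_nhds
      obtain ⟨t, htK, ht1⟩ := (h1'.and (eventually_mem_nhdsWithin (a := (1:ℝ)) (s := Set.Ioi 1))).exists
      have hle : f (t • x) (t • x) ≤ 1 := by rw [hK] at htK; exact htK
      rw [Set.mem_Ioi] at ht1
      simp only [map_smul, LinearMap.smul_apply, smul_eq_mul] at hle
      rw [hx] at hle
      nlinarith

include hsymm hfr in
lemma ftan_orth {x v : X} (hx : f x x = 1) (h : IsForwardTangent K x v) : f x v = 0 := by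
  obtain ⟨p, c, hp, hc, hpx, hcv⟩ := h
  have h1 : ∀ i, f (p i) (p i) = 1 := fun i => (hfr (p i)).1 (hp i)
  have key : ∀ i, f (c i • (p i - x)) (p i + x) = 0 := by
    intro i
    have : f (p i - x) (p i + x) = 0 := by
      have e1 := hsymm (p i) x
      simp only [map_sub, map_add, LinearMap.sub_apply, LinearMap.add_apply]
      rw [h1 i] at *
      linarith [hsymm (p i) x, hx]
    simp only [map_smul, LinearMap.smul_apply, smul_eq_mul, this, mul_zero]
  have hlim : Tendsto (fun i => f (c i • (p i - x)) (p i + x)) atTop (𝓝 (f v (x + x))) := by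
    have h2 : Tendsto (fun i => (c i • (p i - x), p i + x)) atTop (𝓝 (v, x + x)) :=
      hcv.prodMk_nhds (hpx.add tendsto_const_nhds)
    exact ((fcont f).tendsto (v, x + x)).comp h2
  have := tendsto_nhds_unique hlim (by simp only [key]; exact tendsto_const_nhds)
  have hvx : f v x = 0 := by
    simp only [map_add] at this
    have : f v x + f v x = 0 := by linarith [this]
    linarith
  rw [hsymm]; exact hvx

include hsymm hpos hfr in
lemma orth_ftan {x v : X} (hx : f x x = 1) (hv : f x v = 0) : IsForwardTangent K x v := by
  set a := f v v with ha
  have ha0 : 0 ≤ a := by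
    rcases eq_or_ne v 0 with h | h
    · simp [ha, h]
    · exact (hpos v h).le
  set t : ℕ → ℝ := fun i => 1 / (i + 1 : ℝ) with hT
  have ht : ∀ i, 0 < t i := fun i => by positivity
  set r : ℕ → ℝ := fun i => Real.sqrt (1 + (t i)^2 * a) with hR
  have hr1 : ∀ i, 1 ≤ r i := fun i => by
    have h := Real.sqrt_le_sqrt (show (1:ℝ) ≤ 1 + (t i)^2 * a by nlinarith [sq_nonneg (t i)])
    rwa [Real.sqrt_one] at h
  have hrpos : ∀ i, 0 < r i := fun i => lt_of_lt_of_le one_pos (hr1 i)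
  have hrsq : ∀ i, (r i)^2 = 1 + (t i)^2 * a := fun i => by
    rw [hR]; rw [Real.sq_sqrt]; nlinarith [sq_nonneg (t i)]
  refine ⟨fun i => (r i)⁻¹ • (x + t i • v), fun i => r i / t i, ?_, ?_, ?_, ?_⟩
  · intro i
    rw [hfr]
    have hv' : f v x = 0 := (hsymm v x).trans hv
    have e2 : f ((r i)⁻¹ • (x + t i • v)) ((r i)⁻¹ • (x + t i • v))
        = (r i)⁻¹ * ((r i)⁻¹ * (1 + (t i)^2 * a)) := by
      simp only [map_smul, LinearMap.smul_apply, smul_eq_mul, map_add, LinearMap.add_apply,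
        hv', hv, hx]
      ring
    rw [e2, ← hrsq i]
    rw [← mul_assoc, ← mul_inv, ← pow_two, inv_mul_cancel₀ (pow_ne_zero 2 (hrpos i).ne')]
  · exact fun i => div_pos (hrpos i) (ht i)
  · -- p → x
    have htlim : Tendsto t atTop (𝓝 0) := tendsto_one_div_add_atTop_nhds_zero_nat
    have hrlim : Tendsto r atTop (𝓝 1) := by
      have : Tendsto (fun i => 1 + (t i)^2 * a) atTop (𝓝 1) := by
        have := ((htlim.mul htlim).mul_const a).const_add 1
        simpa [pow_two] using this
      have := (Real.continuous_sqrt.tendsto 1).comp this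
      simp only [Real.sqrt_one] at this; exact this
    have h1 : Tendsto (fun i => (r i)⁻¹ • x + ((r i)⁻¹ * t i) • v) atTop (𝓝 x) := by
      have hi : Tendsto (fun i => (r i)⁻¹) atTop (𝓝 1) := by
        simpa using hrlim.inv₀ one_ne_zero
      have h2 : Tendsto (fun i => (r i)⁻¹ • x) atTop (𝓝 ((1:ℝ) • x)) := hi.smul_const x
      have h3 : Tendsto (fun i => ((r i)⁻¹ * t i) • v) atTop (𝓝 ((0:ℝ) • v)) := by
        have := hi.mul htlim
        rw [mul_zero] at this
        exact this.smul_const v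
      have := h2.add h3
      simpa using this
    refine h1.congr fun i => ?_
    rw [smul_add, smul_smul]
  · -- c • (p - x) → v
    have htlim : Tendsto t atTop (𝓝 0) := tendsto_one_div_add_atTop_nhds_zero_nat
    have hrlim : Tendsto r atTop (𝓝 1) := by
      have : Tendsto (fun i => 1 + (t i)^2 * a) atTop (𝓝 1) := by
        have := ((htlim.mul htlim).mul_const a).const_add 1
        simpa [pow_two] using this
      have := (Real.continuous_sqrt.tendsto 1).comp this
      simp only [Real.sqrt_one] at this; exact this
    set e : ℕ → ℝ := fun i => (1 - r i) / t i with hE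
    have hee : ∀ i, e i = (-(t i) * a) / (1 + r i) := by
      intro i
      have h1r : (0:ℝ) < 1 + r i := by linarith [hrpos i]
      rw [hE]
      have htne := (ht i).ne'
      field_simp
      nlinarith [hrsq i]
    have helim : Tendsto e atTop (𝓝 0) := by
      rw [funext hee]
      have hnum : Tendsto (fun i => -(t i) * a) atTop (𝓝 0) := by
        simpa using (htlim.neg.mul_const a)
      have hden : Tendsto (fun i => 1 + r i) atTop (𝓝 2) := by
        have := hrlim.const_add 1
        norm_num at this
        exact this
      have := hnum.div hden (by norm_num)
      rw [zero_div] at this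
      exact this
    have key : ∀ i, (r i / t i) • ((r i)⁻¹ • (x + t i • v) - x) = e i • x + v := by
      intro i
      have hrne : r i ≠ 0 := (hrpos i).ne'
      have htne : t i ≠ 0 := (ht i).ne'
      rw [hE]
      match_scalars
      · field_simp
      · field_simp
    have : Tendsto (fun i => e i • x + v) atTop (𝓝 v) := by
      have := (helim.smul_const x).add_const v
      simpa using this
    exact this.congr fun i => (key i).symm

variable (R : Module.Dual ℝ X →ₗ[ℝ] (X →ₗ[ℝ] X))

include hsymm hpos in
lemma exists_dual (x y : X) (hx : x ≠ 0) (hind : ∀ c : ℝ, y ≠ c • x) :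
    ∃ u : Module.Dual ℝ X, u x = 0 ∧ u y = 1 := by
  have hfxx : f x x ≠ 0 := (hpos x hx).ne'
  set z := y - (f x y / f x x) • x with hz
  have hzne : z ≠ 0 := by
    intro h
    exact hind (f x y / f x x) (by rw [← sub_eq_zero]; exact h)
  have hfz : f z z ≠ 0 := (hpos z hzne).ne'
  have hxz : f x z = 0 := by
    rw [hz]
    simp only [map_sub, map_smul, LinearMap.sub_apply, LinearMap.smul_apply, smul_eq_mul]
    field_simp
    ring
  have hzy : f z y = f z z := by
    have hy : y = z + (f x y / f x x) • x := by rw [hz]; abel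
    conv_lhs => rw [hy]
    simp only [map_add, map_smul, LinearMap.add_apply, LinearMap.smul_apply, smul_eq_mul]
    have : f z x = 0 := (hsymm z x).trans hxz
    rw [this]
    ring
  refine ⟨(f z z)⁻¹ • (f z), ?_, ?_⟩
  · simp only [LinearMap.smul_apply, smul_eq_mul]
    rw [(hsymm z x).trans hxz, mul_zero]
  · simp only [LinearMap.smul_apply, smul_eq_mul]
    rw [hzy]
    field_simp

include hsymm hpos in
theorem main_alg
    (hQ0 : ∀ (lam : Module.Dual ℝ X) (x : X), lam x = 0 → f (R lam x) x = 0)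
    (htr : ∀ lam : Module.Dual ℝ X, LinearMap.trace ℝ X (R lam) = 0) :
    ∀ (lam : Module.Dual ℝ X) (v : X), f (R lam v) v = 0 := by
  classical
  set φ : X → ℝ := fun x => f (R (f x) x) x / f x x with hφ
  have hphi0 : φ 0 = 0 := by simp [hφ]
  have hQ : ∀ (lam : Module.Dual ℝ X) (x : X), f (R lam x) x = lam x * φ x := by
    intro lam x
    rcases eq_or_ne x 0 with rfl | hx
    · simp
    · have hfxx : f x x ≠ 0 := (hpos x hx).ne'
      set c := lam x / f x x with hc
      have hmu : (lam - c • (f x)) x = 0 := by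
        simp only [LinearMap.sub_apply, LinearMap.smul_apply, smul_eq_mul, hc]
        field_simp
        ring
      have h0 := hQ0 (lam - c • (f x)) x hmu
      simp only [map_sub, map_smul, LinearMap.sub_apply, LinearMap.smul_apply,
        smul_eq_mul] at h0
      have h1 : f (R lam x) x = c * f (R (f x) x) x := by linarith
      rw [h1, hφ, hc]
      field_simp
  have hsmul : ∀ (c : ℝ) (x : X), φ (c • x) = c * φ x := by
    intro c x
    rcases eq_or_ne c 0 with rfl | hc
    · simp [hphi0]
    rcases eq_or_ne x 0 with rfl | hx
    · simp [hphi0]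
    have hfxx : f x x ≠ 0 := (hpos x hx).ne'
    have h1 := hQ (f x) (c • x)
    have h2 := hQ (f x) x
    have hL : f (R (f x) (c • x)) (c • x) = c^2 * f (R (f x) x) x := by
      simp only [map_smul, LinearMap.smul_apply, smul_eq_mul]
      ring
    rw [hL, h2] at h1
    have h3 : (f x) (c • x) = c * f x x := by
      rw [map_smul, smul_eq_mul]
    rw [h3] at h1
    have hcf : c * f x x ≠ 0 := mul_ne_zero hc hfxx
    have h4 : c * f x x * φ (c • x) = c * f x x * (c * φ x) := by nlinarith [h1]
    exact mul_left_cancel₀ hcf h4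
  have hexp : ∀ (lam : Module.Dual ℝ X) (x y : X) (s : ℝ),
      f (R lam (x + s • y)) (x + s • y) =
        f (R lam x) x + s * (f (R lam x) y + f (R lam y) x) + s^2 * f (R lam y) y := by
    intro lam x y s
    simp only [map_add, map_smul, LinearMap.add_apply, LinearMap.smul_apply, smul_eq_mul]
    ring
  have hadd : ∀ x y : X, φ (x + y) = φ x + φ y := by
    intro x y
    rcases eq_or_ne x 0 with rfl | hx0
    · simp [hphi0]
    by_cases hdep : ∃ c : ℝ, y = c • x
    · obtain ⟨c, rfl⟩ := hdep
      have h1 : x + c • x = (1 + c) • x := by rw [add_smul, one_smul]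
      rw [h1, hsmul, hsmul]
      ring
    push_neg at hdep
    have hy0 : y ≠ 0 := by
      intro h; exact hdep 0 (by simp [h])
    have hdep' : ∀ c : ℝ, x ≠ c • y := by
      intro c h
      rcases eq_or_ne c 0 with rfl | hc
      · rw [zero_smul] at h; exact hx0 h
      · exact hdep c⁻¹ (by rw [h, smul_smul, inv_mul_cancel₀ hc, one_smul])
    obtain ⟨u, hux, huy⟩ := exists_dual f hsymm hpos x y hx0 hdep
    obtain ⟨w, hwy, hwx⟩ := exists_dual f hsymm hpos y x hy0 hdep'
    -- four equations
    have heq : ∀ (lam : Module.Dual ℝ X) (s : ℝ),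
        lam x * φ x + s * (f (R lam x) y + f (R lam y) x) + s^2 * (lam y * φ y) =
          (lam x + s * lam y) * φ (x + s • y) := by
      intro lam s
      have h := hQ lam (x + s • y)
      rw [hexp, hQ lam x, hQ lam y] at h
      simp only [map_add, map_smul, smul_eq_mul] at h
      exact h
    have hu1 := heq u 1
    have hu2 := heq u 2
    have hw1 := heq w 1
    have hw2 := heq w 2
    rw [hux, huy] at hu1 hu2
    rw [hwx, hwy] at hw1 hw2
    have hxy : x + y = x + (1:ℝ) • y := by rw [one_smul]
    rw [hxy]
    nlinarith [hu1, hu2, hw1, hw2]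
  set ℓ : X →ₗ[ℝ] ℝ :=
    { toFun := φ, map_add' := hadd,
      map_smul' := fun c x => by simpa using hsmul c x } with hℓ
  have hℓapp : ∀ v, ℓ v = φ v := fun v => rfl
  -- orthogonal basis
  have h2 : Invertible (2:ℝ) := invertibleOfNonzero two_ne_zero
  obtain ⟨b, hb⟩ := LinearMap.BilinForm.exists_orthogonal_basis
    (B := f) (LinearMap.isSymm_def.2 fun x y => hsymm x y)
  have hd : ∀ i, 0 < f (b i) (b i) := fun i => hpos _ (b.ne_zero i)
  have hrepr : ∀ (v : X) i, f (b i) v = b.repr v i * f (b i) (b i) := by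
    intro v i
    conv_lhs => rw [← b.sum_repr v]
    rw [map_sum]
    simp only [map_smul, smul_eq_mul]
    rw [Finset.sum_eq_single i]
    · intro j _ hj
      rw [hb (Ne.symm hj), mul_zero]
    · intro h
      exact absurd (Finset.mem_univ i) h
  have htrace := htr ℓ
  rw [LinearMap.trace_eq_matrix_trace ℝ b, Matrix.trace] at htrace
  have hdiag : ∀ i, Matrix.diag (LinearMap.toMatrix b b (R ℓ)) i
      = ℓ (b i)^2 / f (b i) (b i) := by
    intro i
    have h1 : f (b i) (R ℓ (b i)) = b.repr (R ℓ (b i)) i * f (b i) (b i) :=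
      hrepr _ i
    have h2 : f (b i) (R ℓ (b i)) = ℓ (b i) * ℓ (b i) := by
      rw [hsymm, hQ, hℓapp]
    rw [Matrix.diag, LinearMap.toMatrix_apply]
    have := (hd i).ne'
    rw [h2] at h1
    field_simp
    nlinarith [h1]
  rw [Finset.sum_congr rfl (fun i _ => hdiag i)] at htrace
  have hzero : ∀ i, ℓ (b i) = 0 := by
    intro i
    have hnn : ∀ j ∈ Finset.univ, 0 ≤ ℓ (b j)^2 / f (b j) (b j) :=
      fun j _ => div_nonneg (sq_nonneg _) (hd j).le
    have := (Finset.sum_eq_zero_iff_of_nonneg hnn).1 htrace i (Finset.mem_univ i)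
    field_simp [(hd i).ne'] at this
    exact (pow_eq_zero_iff two_ne_zero).mp (this.trans (mul_zero _))
  have hℓ0 : ℓ = 0 := b.ext fun i => by rw [hzero i]; rfl
  intro lam v
  rw [hQ]
  have : φ v = 0 := by rw [← hℓapp, hℓ0]; rfl
  rw [this, mul_zero]

end RTE_aux

set_option maxHeartbeats 1000000 in
/-- **Lemma (`R` tangent for an ellipsoid).**  Let `K ⊂ X` be the unit ball of an inner
product `f` on a finite-dimensional real vector space `X`, and let `R : X* → Hom(X, X)` be a
linear map whose values are trace-free and such that `R_λ(x)` is tangent to `∂K` at `x`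
whenever `x ∈ ∂K` and `λ(x) = 0`.  Then `⟨R_λ(v), v⟩ = 0` for all `λ ∈ X*` and `v ∈ X`; in
particular, `R_λ(x)` is tangent to `∂K` at every `x ∈ ∂K`. -/
theorem R_tangent_for_ellipsoid
    {X : Type*} [NormedAddCommGroup X] [NormedSpace ℝ X] [FiniteDimensional ℝ X]
    (f : X →ₗ[ℝ] X →ₗ[ℝ] ℝ)
    (hsymm : ∀ x y, f x y = f y x) (hpos : ∀ x, x ≠ 0 → 0 < f x x)
    (K : Set X) (hK : K = {x | f x x ≤ 1})
    (R : Module.Dual ℝ X →ₗ[ℝ] (X →ₗ[ℝ] X))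
    (htr : ∀ lam : Module.Dual ℝ X, LinearMap.trace ℝ X (R lam) = 0)
    (htang : ∀ lam : Module.Dual ℝ X, ∀ x ∈ frontier K, lam x = 0 →
      IsTangentVec K x (R lam x)) :
    (∀ (lam : Module.Dual ℝ X) (v : X), f (R lam v) v = 0) ∧
      (∀ lam : Module.Dual ℝ X, ∀ x ∈ frontier K, IsTangentVec K x (R lam x)) := by
  have hfr : ∀ x, x ∈ frontier K ↔ f x x = 1 := frontier_char f K hK
  -- the quadratic form vanishes on the kernel of each `lam`
  have hQ0 : ∀ (lam : Module.Dual ℝ X) (x : X), lam x = 0 → f (R lam x) x = 0 := by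
    intro lam x hlx
    rcases eq_or_ne x 0 with rfl | hx
    · simp
    have hfxx : 0 < f x x := hpos x hx
    set r := Real.sqrt (f x x) with hr
    have hrpos : 0 < r := Real.sqrt_pos.2 hfxx
    have hr2 : r^2 = f x x := Real.sq_sqrt hfxx.le
    set x' := r⁻¹ • x with hx'
    have hfx' : f x' x' = 1 := by
      rw [hx']
      simp only [map_smul, LinearMap.smul_apply, smul_eq_mul]
      rw [← hr2]
      field_simp
    have hlx' : lam x' = 0 := by rw [hx', map_smul, hlx, smul_zero]
    have htv := htang lam x' ((hfr x').2 hfx') hlx'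
    have horth : f x' (R lam x') = 0 := ftan_orth f hsymm K hfr hfx' htv.1
    have hxx' : x = r • x' := by
      rw [hx', smul_smul, mul_inv_cancel₀ hrpos.ne', one_smul]
    rw [hxx']
    simp only [map_smul, LinearMap.smul_apply, smul_eq_mul]
    rw [hsymm (R lam x') x', horth, mul_zero, mul_zero]
  have part1 := main_alg f hsymm hpos R hQ0 htr
  refine ⟨part1, ?_⟩
  intro lam x hx
  have hx1 : f x x = 1 := (hfr x).1 hx
  have hv : f x (R lam x) = 0 := (hsymm x (R lam x)).trans (part1 lam x)
  have hvneg : f x (-(R lam x)) = 0 := by rw [map_neg, hv, neg_zero]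
  exact ⟨orth_ftan f hsymm hpos K hfr hx1 hv, orth_ftan f hsymm hpos K hfr hx1 hvneg⟩
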